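/- Let u, v, w be real numbers with 0 < u < v < w < 1, let (r_k)_{k≥1} be a sequence of positive numbers with u < r_k < v for all k, and let (f_k)_{k≥1} be a sequence of holomorphic automorphisms of the unit disc Δ such that the sets f_k(cl Δ_w) (images of the closed disc of radius w) are pairwise disjoint. Then the domain D = Δ \ (⋃_{k=1}^∞ f_k(cl Δ_{r_k})) has squeezing function with a positive lower bound: there exists c > 0 with s_D(z) ≥ c for all z ∈ D (D is a holomorphic homogeneous regular domain, which may be infinitely connected). -/

import Mathlib

open Metric

namespace Stmt14Aux

open Complex

local notation "conj'" => starRingEnd ℂ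

noncomputable def mob (a z : ℂ) : ℂ := (z - a) / (1 - conj' a * z)

noncomputable def prho (a b : ℂ) : ℝ := ‖b - a‖ / ‖1 - conj' a * b‖

lemma normsq_key (a z : ℂ) : ‖1 - conj' a * z‖^2 - ‖z - a‖^2 = (1 - ‖a‖^2) * (1 - ‖z‖^2) := by
  have h : ∀ w : ℂ, ‖w‖^2 = Complex.normSq w := fun w => by
    rw [Complex.sq_norm]
  simp only [h, Complex.normSq_apply, Complex.sub_re, Complex.sub_im, Complex.mul_re,
    Complex.mul_im, Complex.one_re, Complex.one_im, Complex.conj_re, Complex.conj_im]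
  ring

lemma denom_ne (a z : ℂ) (ha : ‖a‖ < 1) (hz : ‖z‖ ≤ 1) : 1 - conj' a * z ≠ 0 := by
  intro h
  have : ‖conj' a * z‖ < 1 := by
    rw [norm_mul, RCLike.norm_conj]
    calc ‖a‖ * ‖z‖ ≤ ‖a‖ * 1 := by nlinarith [norm_nonneg (a:ℂ), norm_nonneg z]
    _ < 1 := by linarith
  rw [sub_eq_zero] at h
  rw [← h] at this
  simp at this

lemma denom_pos (a z : ℂ) (ha : ‖a‖ < 1) (hz : ‖z‖ ≤ 1) : 0 < ‖1 - conj' a * z‖ :=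
  norm_pos_iff.2 (denom_ne a z ha hz)

lemma mob_norm (a b : ℂ) : ‖mob a b‖ = prho a b := norm_div _ _

lemma mob_mem (a z : ℂ) (ha : ‖a‖ < 1) (hz : ‖z‖ < 1) : ‖mob a z‖ < 1 := by
  have hd := denom_pos a z ha hz.le
  rw [mob, norm_div, div_lt_one hd]
  have hP : 0 < (1-‖a‖^2)*(1-‖z‖^2) :=
    mul_pos (by nlinarith [norm_nonneg a]) (by nlinarith [norm_nonneg z])
  have hsq : ‖z - a‖^2 < ‖1 - conj' a * z‖^2 := by
    nlinarith [normsq_key a z, hP]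
  nlinarith [norm_nonneg (z - a), hd]

lemma prho_lt_one (a b : ℂ) (ha : ‖a‖ < 1) (hb : ‖b‖ < 1) : prho a b < 1 := by
  rw [← mob_norm]; exact mob_mem a b ha hb

lemma prho_nonneg (a b : ℂ) : 0 ≤ prho a b := div_nonneg (norm_nonneg _) (norm_nonneg _)

lemma mob_self (a : ℂ) : mob a a = 0 := by simp [mob]

lemma mob_left_inv (a z : ℂ) (ha : ‖a‖ < 1) (hz : ‖z‖ < 1) : mob (-a) (mob a z) = z := by
  have h1 : (1 : ℂ) - conj' a * z ≠ 0 := denom_ne a z ha hz.le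
  have h2 : (1 : ℂ) - conj' a * a ≠ 0 := denom_ne a a ha ha.le
  rw [mob, mob, map_neg]
  rw [div_eq_iff]
  · have h1' : (1 : ℂ) - z * conj' a ≠ 0 := by rwa [mul_comm]
    field_simp
    ring
  · intro h
    apply h2
    have := mul_eq_zero_of_left h (1 - conj' a * z)
    field_simp at this
    linear_combination this

lemma mob_right_inv (a z : ℂ) (ha : ‖a‖ < 1) (hz : ‖z‖ < 1) : mob a (mob (-a) z) = z := by
  have := mob_left_inv (-a) z (by simpa using ha) hz
  simpa [neg_neg] using this

lemma mob_diff_at (a z : ℂ) (ha : ‖a‖ < 1) (hz : ‖z‖ < 1) : DifferentiableAt ℂ (mob a) z := by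
  apply DifferentiableAt.div
  · exact (differentiable_id.sub_const a).differentiableAt
  · exact (differentiableAt_const _).sub ((differentiableAt_const _).mul differentiableAt_id)
  · exact denom_ne a z ha hz.le

lemma mob_diffOn (a : ℂ) (ha : ‖a‖ < 1) : DifferentiableOn ℂ (mob a) (ball 0 1) :=
  fun z hz => (mob_diff_at a z ha (by simpa using mem_ball_zero_iff.1 hz)).differentiableWithinAt

lemma mob_mapsTo (a : ℂ) (ha : ‖a‖ < 1) :
    Set.MapsTo (mob a) (ball (0:ℂ) 1) (ball (0:ℂ) 1) := fun z hz =>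
  mem_ball_zero_iff.2 (mob_mem a z ha (mem_ball_zero_iff.1 hz))

lemma prho_symm (a b : ℂ) : prho a b = prho b a := by
  rw [prho, prho, norm_sub_rev]
  congr 1
  rw [← RCLike.norm_conj (1 - conj' a * b)]
  congr 1
  simp [map_sub, map_mul]
  ring

lemma mob_sub (c a b : ℂ) (h1 : 1 - conj' c * a ≠ 0) (h2 : 1 - conj' c * b ≠ 0) :
    mob c a - mob c b = (a - b) * (1 - conj' c * c) / ((1 - conj' c * a) * (1 - conj' c * b)) := by
  rw [mob, mob, eq_div_iff (mul_ne_zero h1 h2)]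
  have h1' : 1 - a * conj' c ≠ 0 := by rwa [mul_comm]
  have h2' : 1 - b * conj' c ≠ 0 := by rwa [mul_comm]
  field_simp
  ring

lemma mob_one_sub (c a b : ℂ) (h1 : 1 - conj' c * a ≠ 0) (h2 : 1 - conj' c * b ≠ 0) :
    1 - conj' (mob c a) * mob c b
      = (1 - conj' a * b) * (1 - conj' c * c) / (conj' (1 - conj' c * a) * (1 - conj' c * b)) := by
  have h1' : conj' (1 - conj' c * a) ≠ 0 := by
    simpa using (map_ne_zero (starRingEnd ℂ)).2 h1
  have hD : conj' (1 - conj' c * a) * (1 - conj' c * b) ≠ 0 := mul_ne_zero h1' h2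
  rw [eq_div_iff hD, mob, mob, map_div₀, sub_mul, one_mul, div_mul_div_comm,
    div_mul_cancel₀ _ hD]
  simp only [map_sub, map_mul, Complex.conj_conj, map_one]
  ring

lemma prho_mob (c a b : ℂ) (hc : ‖c‖ < 1) (ha : ‖a‖ < 1) (hb : ‖b‖ < 1) :
    prho (mob c a) (mob c b) = prho a b := by
  have h1 := denom_ne c a hc ha.le
  have h2 := denom_ne c b hc hb.le
  have hcc := denom_ne c c hc hc.le
  have hab := denom_ne a b ha hb.le
  have e1 : ‖mob c b - mob c a‖
      = ‖b - a‖ * ‖1 - conj' c * c‖ / (‖1 - conj' c * b‖ * ‖1 - conj' c * a‖) := by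
    rw [mob_sub c b a h2 h1]
    rw [norm_div, norm_mul, norm_mul]
  have e2 : ‖1 - conj' (mob c a) * mob c b‖
      = ‖1 - conj' a * b‖ * ‖1 - conj' c * c‖ / (‖1 - conj' c * a‖ * ‖1 - conj' c * b‖) := by
    rw [mob_one_sub c a b h1 h2]
    rw [norm_div, norm_mul, norm_mul, RCLike.norm_conj]
  have lem : ∀ X Y M P : ℝ, Y ≠ 0 → M ≠ 0 → P ≠ 0 → (X * M / P) / (Y * M / P) = X / Y := by
    intros X Y M P hY hM hP
    field_simp
  rw [prho, prho, e1, e2, mul_comm ‖(1:ℂ) - conj' c * b‖]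
  exact lem _ _ _ _ (norm_ne_zero_iff.2 hab) (norm_ne_zero_iff.2 hcc)
    (mul_ne_zero (norm_ne_zero_iff.2 h1) (norm_ne_zero_iff.2 h2))

lemma cross_lower (a b : ℂ) (ha : ‖a‖ < 1) (hb : ‖b‖ < 1) :
    (‖b‖ - ‖a‖) * ‖1 - conj' a * b‖ ≤ ‖b - a‖ * (1 - ‖a‖ * ‖b‖) := by
  rcases le_or_gt ‖b‖ ‖a‖ with h | h
  · have h1 : (‖b‖ - ‖a‖) * ‖1 - conj' a * b‖ ≤ 0 :=
      mul_nonpos_of_nonpos_of_nonneg (by linarith) (norm_nonneg _)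
    have h2 : (0:ℝ) ≤ ‖b - a‖ * (1 - ‖a‖ * ‖b‖) := by
      apply mul_nonneg (norm_nonneg _)
      nlinarith [norm_nonneg a, norm_nonneg b]
    linarith
  · have hd : ‖b‖ - ‖a‖ ≤ ‖b - a‖ := norm_sub_norm_le b a
    have hkey := normsq_key a b
    have hP : 0 ≤ (1-‖a‖^2)*(1-‖b‖^2) :=
      mul_nonneg (by nlinarith [norm_nonneg a]) (by nlinarith [norm_nonneg b])
    have hint : 0 ≤ (‖b-a‖^2 - (‖b‖-‖a‖)^2) * ((1-‖a‖^2)*(1-‖b‖^2)) :=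
      mul_nonneg (by nlinarith [hd, h]) hP
    have hsq : ((‖b‖ - ‖a‖) * ‖1 - conj' a * b‖)^2 ≤ (‖b - a‖ * (1 - ‖a‖ * ‖b‖))^2 := by
      nlinarith [hkey, hint]
    have h1 : 0 ≤ (‖b‖ - ‖a‖) * ‖1 - conj' a * b‖ :=
      mul_nonneg (by linarith) (norm_nonneg _)
    have h2 : 0 ≤ ‖b - a‖ * (1 - ‖a‖ * ‖b‖) := by
      apply mul_nonneg (norm_nonneg _); nlinarith [norm_nonneg a, norm_nonneg b]
    nlinarith [hsq, h1, h2]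

lemma cross_upper (a b : ℂ) (ha : ‖a‖ < 1) (hb : ‖b‖ < 1) :
    ‖b - a‖ * (1 + ‖a‖ * ‖b‖) ≤ (‖a‖ + ‖b‖) * ‖1 - conj' a * b‖ := by
  have hd : ‖b - a‖ ≤ ‖a‖ + ‖b‖ := by
    have := norm_sub_le b a; linarith
  have hkey := normsq_key a b
  have hP : 0 ≤ (1-‖a‖^2)*(1-‖b‖^2) :=
    mul_nonneg (by nlinarith [norm_nonneg a]) (by nlinarith [norm_nonneg b])
  have hint : 0 ≤ ((‖a‖+‖b‖)^2 - ‖b-a‖^2) * ((1-‖a‖^2)*(1-‖b‖^2)) :=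
    mul_nonneg (by nlinarith [hd, norm_nonneg (b-a), norm_nonneg a, norm_nonneg b]) hP
  have hsq : (‖b - a‖ * (1 + ‖a‖ * ‖b‖))^2 ≤ ((‖a‖ + ‖b‖) * ‖1 - conj' a * b‖)^2 := by
    nlinarith [hkey, hint]
  have h1 : 0 ≤ ‖b - a‖ * (1 + ‖a‖ * ‖b‖) := by positivity
  have h2 : 0 ≤ (‖a‖ + ‖b‖) * ‖1 - conj' a * b‖ := by positivity
  nlinarith [hsq, h1, h2]

lemma norm_sub_le_prho (a b : ℂ) (ha : ‖a‖ < 1) (hb : ‖b‖ < 1) : ‖b‖ - ‖a‖ ≤ prho a b := by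
  have hY := denom_pos a b ha hb.le
  rw [prho, le_div_iff₀ hY]
  have := cross_lower a b ha hb
  have h1 : ‖b - a‖ * (1 - ‖a‖ * ‖b‖) ≤ ‖b - a‖ := by
    nlinarith [norm_nonneg (b - a), mul_nonneg (norm_nonneg a) (norm_nonneg b)]
  linarith

lemma norm_bound (a b : ℂ) (ha : ‖a‖ < 1) (hb : ‖b‖ < 1) {s : ℝ} (hs : 0 ≤ s)
    (h : prho a b ≤ s) : ‖b‖ * (1 + s * ‖a‖) ≤ ‖a‖ + s := by
  have hY := denom_pos a b ha hb.le
  have hX : ‖b - a‖ ≤ s * ‖1 - conj' a * b‖ := by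
    rw [prho, div_le_iff₀ hY] at h; exact h
  have hcl := cross_lower a b ha hb
  have hstep : (‖b‖ - ‖a‖) * ‖1 - conj' a * b‖ ≤ s * ‖1 - conj' a * b‖ * (1 - ‖a‖ * ‖b‖) := by
    have h2 : (0:ℝ) ≤ 1 - ‖a‖ * ‖b‖ := by nlinarith [norm_nonneg a, norm_nonneg b]
    nlinarith [hcl, hX, h2]
  have : ‖b‖ - ‖a‖ ≤ s * (1 - ‖a‖ * ‖b‖) := by
    have := (mul_le_mul_iff_of_pos_right hY).1 (by linarith [hstep] : (‖b‖ - ‖a‖) * ‖1 - conj' a * b‖ ≤ (s * (1 - ‖a‖ * ‖b‖)) * ‖1 - conj' a * b‖)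
    linarith [this]
  nlinarith [this]

lemma prho_le_add (a b : ℂ) (ha : ‖a‖ < 1) (hb : ‖b‖ < 1) : prho a b ≤ ‖a‖ + ‖b‖ := by
  have hY := denom_pos a b ha hb.le
  rw [prho, div_le_iff₀ hY]
  have h1 := cross_upper a b ha hb
  have h2 : ‖b - a‖ ≤ ‖b - a‖ * (1 + ‖a‖ * ‖b‖) := by
    nlinarith [norm_nonneg (b - a), mul_nonneg (norm_nonneg a) (norm_nonneg b)]
  linarith

lemma prho_triangle (z a b : ℂ) (hz : ‖z‖ < 1) (ha : ‖a‖ < 1) (hb : ‖b‖ < 1) :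
    prho a b ≤ prho z a + prho z b := by
  have := prho_le_add (mob z a) (mob z b) (mob_mem z a hz ha) (mob_mem z b hz hb)
  rw [prho_mob z a b hz ha hb, mob_norm, mob_norm] at this
  exact this

lemma schwarz_pick {F : ℂ → ℂ} (hd : DifferentiableOn ℂ F (ball 0 1))
    (hm : Set.MapsTo F (ball (0:ℂ) 1) (ball (0:ℂ) 1)) {a b : ℂ} (ha : ‖a‖ < 1) (hb : ‖b‖ < 1) :
    prho (F a) (F b) ≤ prho a b := by
  have haball : a ∈ ball (0:ℂ) 1 := mem_ball_zero_iff.2 ha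
  have hFa : ‖F a‖ < 1 := mem_ball_zero_iff.1 (hm haball)
  have hna : ‖(-a : ℂ)‖ < 1 := by simpa using ha
  set H : ℂ → ℂ := fun w => mob (F a) (F (mob (-a) w)) with hHdef
  have hd1 : DifferentiableOn ℂ (fun w => F (mob (-a) w)) (ball 0 1) :=
    hd.comp (mob_diffOn (-a) hna) (mob_mapsTo (-a) hna)
  have hdH : DifferentiableOn ℂ H (ball 0 1) :=
    (mob_diffOn (F a) hFa).comp hd1 (fun w hw => hm ((mob_mapsTo (-a) hna) hw))
  have hmH : Set.MapsTo H (ball (0:ℂ) 1) (ball (0:ℂ) 1) :=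
    fun w hw => (mob_mapsTo (F a) hFa) (hm ((mob_mapsTo (-a) hna) hw))
  have hH0 : H 0 = 0 := by
    have : mob (-a) 0 = a := by simp [mob]
    simp only [hHdef, this, mob_self]
  have hzb : ‖mob a b‖ < 1 := by
    exact mob_mem a b ha hb
  have hsch := Complex.norm_le_norm_of_mapsTo_ball hdH (hmH.mono_right ball_subset_closedBall) hH0 hzb
  have hHab : H (mob a b) = mob (F a) (F b) := by
    simp only [hHdef, mob_left_inv a b ha hb]
  rw [hHab] at hsch
  rw [mob_norm, mob_norm] at hsch
  exact hsch

lemma prho_div_formula {t : ℝ} (ht : 0 < t) {p s : ℂ} (hp : p ≠ 0) (hs : s ≠ 0) :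
    prho ((t:ℂ)/p) ((t:ℂ)/s) = t * ‖p - s‖ / ‖conj' p * s - ((t:ℂ))^2‖ := by
  have hpc : conj' p ≠ 0 := (map_ne_zero (starRingEnd ℂ)).2 hp
  have e1 : (t:ℂ)/s - (t:ℂ)/p = (t:ℂ) * (p - s) / (p * s) := by
    field_simp
  have e2 : 1 - conj' ((t:ℂ)/p) * ((t:ℂ)/s) = (conj' p * s - ((t:ℂ))^2) / (conj' p * s) := by
    rw [map_div₀, Complex.conj_ofReal]
    field_simp
  have hts : ‖((t:ℝ):ℂ)‖ = t := by
    rw [Complex.norm_real]; exact abs_of_pos ht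
  have hpn : ‖p‖ ≠ 0 := norm_ne_zero_iff.2 hp
  have hsn : ‖s‖ ≠ 0 := norm_ne_zero_iff.2 hs
  rw [prho, e1, e2]
  simp only [norm_div, norm_mul, RCLike.norm_conj, hts]
  rcases eq_or_ne ‖conj' p * s - ((t:ℂ))^2‖ 0 with h0 | h0
  · rw [h0]; simp
  · have h1 : ‖p‖ ≠ 0 := hpn
    have h2 : ‖s‖ ≠ 0 := hsn
    field_simp

end Stmt14Aux

namespace Stmt14Aux

lemma arith_sep {X A s3 v w : ℝ} (hxb : X * (1 + s3 * A) ≤ A + s3) (hA0 : 0 ≤ A)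
    (hAv : A ≤ v) (hX : 0 ≤ X) (hs3 : 0 < s3) (hs31 : s3 < 1)
    (hs3w : s3 * (1 - v * w) = w - v) (hv : 0 ≤ v) (hw0 : 0 ≤ w) (hw1 : w < 1)
    (hvw : v < w) : X ≤ w := by
  have h1 : 0 ≤ 1 - w * s3 := by nlinarith
  have h2 : 0 ≤ (1 - w * s3) * (v - A) := mul_nonneg h1 (by linarith)
  have h3 : A + s3 ≤ w * (1 + s3 * A) := by nlinarith [h2, hs3w]
  nlinarith [hxb, h3, (show (0:ℝ) < 1 + s3 * A by nlinarith)]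

lemma arith_mono {B A tt ss : ℝ} (h : B * (1 + ss * A) ≤ A + ss) (hA0 : 0 ≤ A)
    (hAt : A ≤ tt) (hB0 : 0 ≤ B) (hss0 : 0 ≤ ss) (hss1 : ss ≤ 1) (hB1 : B ≤ 1) :
    B * (1 + ss * tt) ≤ tt + ss := by
  have h1 : 0 ≤ (1 - B * ss) * (tt - A) := mul_nonneg (by nlinarith) (by linarith)
  nlinarith [h, h1]

lemma arith_qlb {B t s1 c1 u v : ℝ} (hbub : B * (1 + s1 * t) ≤ t + s1) (h0u : 0 < u)
    (hut : u < t) (htv : t < v) (hv1 : v < 1) (hs10 : 0 < s1) (hs1h : s1 ≤ 1/2)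
    (hc1 : c1 = u * (1 - v) / 4) (hB : 0 < B) : (t + c1) * B ≤ t := by
  have hc1pos : 0 < c1 := by rw [hc1]; nlinarith
  have q1 : u * (1 - v) ≤ t * (1 - t) := by nlinarith
  have q2 : t * (1 - t) * (1/2) ≤ t * (1 - t) * (1 - s1) := by nlinarith
  have e1 : c1 * (t + s1) ≤ (u * (1 - v) / 4) * (3/2) := by
    rw [hc1]; nlinarith
  have key : (t + c1) * (t + s1) ≤ t * (1 + s1 * t) := by nlinarith
  have hpos : 0 < 1 + s1 * t := by nlinarith
  nlinarith [mul_le_mul_of_nonneg_left hbub (by nlinarith : (0:ℝ) ≤ t + c1), key, hpos,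
    mul_pos hpos hB]

end Stmt14Aux


open Metric Stmt14Aux Complex

local notation "conj'" => starRingEnd ℂ

open Metric

/-- The squeezing function of a bounded planar domain `D ⊆ ℂ` at a point `p ∈ D`:
the supremum of all `r > 0` such that some injective holomorphic map `f : D → Δ`
with `f p = 0` satisfies `Δ_r ⊆ f '' D`. -/
noncomputable def squeezingFn (D : Set ℂ) (p : ℂ) : ℝ :=
  sSup { r : ℝ | ∃ f : ℂ → ℂ,
    DifferentiableOn ℂ f D ∧ Set.InjOn f D ∧ f '' D ⊆ ball (0 : ℂ) 1 ∧ f p = 0 ∧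
    0 < r ∧ ball (0 : ℂ) r ⊆ f '' D }

set_option maxHeartbeats 1000000 in
/-- Let `0 < u < v < w < 1`, let `r k ∈ (u, v)`, and let `f k` be
holomorphic automorphisms of the unit disc `Δ` such that the images `f k '' cl Δ_w` are
pairwise disjoint. Then the domain `D = Δ \ ⋃ k, f k '' cl Δ_{r k}` has a squeezing
function with a positive lower bound (it is holomorphic homogeneous regular). -/
theorem stmt_14 (u v w : ℝ) (h0u : 0 < u) (huv : u < v) (hvw : v < w) (hw1 : w < 1)
    (r : ℕ → ℝ) (hr : ∀ k, u < r k ∧ r k < v)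
    (f : ℕ → ℂ → ℂ)
    (hhol : ∀ k, DifferentiableOn ℂ (f k) (ball (0 : ℂ) 1))
    (hbij : ∀ k, Set.BijOn (f k) (ball (0 : ℂ) 1) (ball (0 : ℂ) 1))
    (hinv : ∀ k, ∃ g : ℂ → ℂ, DifferentiableOn ℂ g (ball (0 : ℂ) 1) ∧
      ∀ z ∈ ball (0 : ℂ) 1, g (f k z) = z)
    (hdisj : ∀ j k, j ≠ k →
      Disjoint (f j '' closedBall (0 : ℂ) w) (f k '' closedBall (0 : ℂ) w)) :
    ∃ c > 0, ∀ z ∈ ball (0 : ℂ) 1 \ ⋃ k, f k '' closedBall (0 : ℂ) (r k),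
      c ≤ squeezingFn (ball (0 : ℂ) 1 \ ⋃ k, f k '' closedBall (0 : ℂ) (r k)) z := by
  classical
  have hv1 : v < 1 := lt_trans hvw hw1
  have hu1 : u < 1 := lt_trans huv hv1
  have hv0 : 0 < v := lt_trans h0u huv
  set DD : Set ℂ := ball (0 : ℂ) 1 \ ⋃ k, f k '' closedBall (0 : ℂ) (r k) with hDDdef
  have hDsub : DD ⊆ ball (0:ℂ) 1 := Set.diff_subset
  -- constants
  have hvw1 : 0 < 1 - v * w := by nlinarith only [hv0, hw1, hvw]
  obtain ⟨s3, hs3def⟩ : ∃ x : ℝ, x = (w - v) / (1 - v * w) := ⟨_, rfl⟩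
  have hs3pos : 0 < s3 := by rw [hs3def]; exact div_pos (by linarith) hvw1
  have hs3lt1 : s3 < 1 := by
    rw [hs3def, div_lt_one hvw1]
    nlinarith only [hw1, hv0, hvw]
  have hs3id : s3 * (1 - v * w) = w - v := by
    rw [hs3def]; exact div_mul_cancel₀ _ (ne_of_gt hvw1)
  obtain ⟨s1, hs1def⟩ : ∃ x : ℝ, x = min (s3 / 2) (1 / 2) := ⟨_, rfl⟩
  have hs1pos : 0 < s1 := by
    rw [hs1def]; exact lt_min (by linarith only [hs3pos]) (by norm_num)
  have hs1le : s1 ≤ s3 / 2 := by rw [hs1def]; exact min_le_left _ _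
  have hs1half : s1 ≤ 1 / 2 := by rw [hs1def]; exact min_le_right _ _
  obtain ⟨c1, hc1def⟩ : ∃ x : ℝ, x = u * (1 - v) / 4 := ⟨_, rfl⟩
  have hc1pos : 0 < c1 := by
    rw [hc1def]
    have : 0 < 1 - v := by linarith
    positivity
  obtain ⟨s4, hs4def⟩ : ∃ x : ℝ, x = s3 - s1 := ⟨_, rfl⟩
  have hs4pos : 0 < s4 := by rw [hs4def]; linarith only [hs1le, hs3pos]
  have hs4lt1 : s4 < 1 := by rw [hs4def]; linarith only [hs3lt1, hs1pos]
  obtain ⟨c, hcdef⟩ : ∃ x : ℝ, x = min s1 (c1 * s4 / 4) := ⟨_, rfl⟩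
  have hcpos : 0 < c := by
    rw [hcdef]
    exact lt_min hs1pos (by positivity)
  have hc_le_s1 : c ≤ s1 := by rw [hcdef]; exact min_le_left _ _
  have hc_le : c ≤ c1 * s4 / 4 := by rw [hcdef]; exact min_le_right _ _
  have hc_half_c1 : c ≤ c1 / 2 := by
    have h' : c1 * s4 ≤ c1 := by nlinarith only [hc1pos, hs4lt1, hs4pos]
    linarith only [hc_le, h', hc1pos]
  have hc_lt1 : c < 1 := by linarith only [hc_le_s1, hs1half, hcpos]
  refine ⟨c, hcpos, ?_⟩
  intro z hz
  obtain ⟨hzball, hzK⟩ := hz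
  have hz1 : ‖z‖ < 1 := mem_ball_zero_iff.1 hzball
  have hfmaps : ∀ k, Set.MapsTo (f k) (ball (0:ℂ) 1) (ball (0:ℂ) 1) := fun k => (hbij k).mapsTo
  have hrk1 : ∀ k, r k < 1 := fun k => lt_trans (hr k).2 hv1
  have hrk0 : ∀ k, 0 < r k := fun k => lt_trans h0u (hr k).1
  have hzKk : ∀ k, z ∉ f k '' closedBall (0:ℂ) (r k) := fun k hk =>
    hzK (Set.mem_iUnion.2 ⟨k, hk⟩)
  have hKball : ∀ k, ∀ x ∈ f k '' closedBall (0:ℂ) (r k), ‖x‖ < 1 := by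
    rintro k x ⟨a, ha, rfl⟩
    have ha1 : ‖a‖ < 1 := lt_of_le_of_lt (mem_closedBall_zero_iff.1 ha) (hrk1 k)
    exact mem_ball_zero_iff.1 (hfmaps k (mem_ball_zero_iff.2 ha1))
  -- g maps ball to ball, and right-inverse property
  have hgprops : ∀ k (g : ℂ → ℂ), (∀ x ∈ ball (0:ℂ) 1, g (f k x) = x) →
      (Set.MapsTo g (ball (0:ℂ) 1) (ball (0:ℂ) 1) ∧ ∀ x ∈ ball (0:ℂ) 1, f k (g x) = x) := by
    intro k g hgf
    constructor
    · intro x hx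
      obtain ⟨x', hx', rfl⟩ := (hbij k).surjOn hx
      rw [hgf x' hx']; exact hx'
    · intro x hx
      obtain ⟨x', hx', rfl⟩ := (hbij k).surjOn hx
      rw [hgf x' hx']
  -- f k is a prho-isometry
  have iso : ∀ k (g : ℂ → ℂ), DifferentiableOn ℂ g (ball 0 1) →
      (∀ x ∈ ball (0:ℂ) 1, g (f k x) = x) →
      ∀ a b : ℂ, ‖a‖ < 1 → ‖b‖ < 1 → prho (f k a) (f k b) = prho a b := by
    intro k g hgd hgf a b ha hb
    obtain ⟨hgm, _⟩ := hgprops k g hgf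
    have hfa : ‖f k a‖ < 1 := mem_ball_zero_iff.1 (hfmaps k (mem_ball_zero_iff.2 ha))
    have hfb : ‖f k b‖ < 1 := mem_ball_zero_iff.1 (hfmaps k (mem_ball_zero_iff.2 hb))
    refine le_antisymm (schwarz_pick (hhol k) (hfmaps k) ha hb) ?_
    have h2 := schwarz_pick hgd hgm hfa hfb
    rwa [hgf a (mem_ball_zero_iff.2 ha), hgf b (mem_ball_zero_iff.2 hb)] at h2
  -- separation of the removed discs
  have sep : ∀ j k, j ≠ k → ∀ a ∈ f j '' closedBall (0:ℂ) (r j),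
      ∀ b ∈ f k '' closedBall (0:ℂ) (r k), s3 < prho a b := by
    intro j k hjk a ha b hb
    by_contra hle
    rw [not_lt] at hle
    obtain ⟨g, hgd, hgf⟩ := hinv j
    obtain ⟨hgm, hfg⟩ := hgprops j g hgf
    obtain ⟨a', ha'm, rfl⟩ := ha
    have ha'n : ‖a'‖ ≤ r j := mem_closedBall_zero_iff.1 ha'm
    have ha'1 : ‖a'‖ < 1 := lt_of_le_of_lt ha'n (hrk1 j)
    have hb1 : ‖b‖ < 1 := hKball k b hb
    obtain ⟨x, hx, hfx⟩ := (hbij j).surjOn (mem_ball_zero_iff.2 hb1)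
    have hx1 : ‖x‖ < 1 := mem_ball_zero_iff.1 hx
    have hiso := iso j g hgd hgf a' x ha'1 hx1
    rw [hfx] at hiso
    have hpx : prho a' x ≤ s3 := by rw [← hiso]; exact hle
    have hxb := norm_bound a' x ha'1 hx1 hs3pos.le hpx
    have ha'v : ‖a'‖ ≤ v := le_trans ha'n (hr j).2.le
    have hxw : ‖x‖ ≤ w := arith_sep hxb (norm_nonneg a') ha'v (norm_nonneg x)
      hs3pos hs3lt1 hs3id (by linarith only [h0u, huv])
      (by linarith only [h0u, huv, hvw]) hw1 hvw
    have hbj : b ∈ f j '' closedBall (0:ℂ) w := ⟨x, mem_closedBall_zero_iff.2 hxw, hfx⟩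
    have hbk : b ∈ f k '' closedBall (0:ℂ) w := by
      obtain ⟨b', hb'm, rfl⟩ := hb
      exact ⟨b', mem_closedBall_zero_iff.2
        (le_trans (mem_closedBall_zero_iff.1 hb'm) (by linarith only [(hr k).2, hvw])), rfl⟩
    exact Set.disjoint_left.1 (hdisj j k hjk) hbj hbk
  -- main existence statement
  have main : ∃ F : ℂ → ℂ, DifferentiableOn ℂ F DD ∧ Set.InjOn F DD ∧
      F '' DD ⊆ ball (0:ℂ) 1 ∧ F z = 0 ∧ 0 < c ∧ ball (0:ℂ) c ⊆ F '' DD := by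
    by_cases hcase : ∃ k, ∃ x0 ∈ f k '' closedBall (0:ℂ) (r k), prho z x0 < s1
    · -- Case B : some removed disc is close to z
      obtain ⟨j, x0, hx0K, hx0near⟩ := hcase
      obtain ⟨t, htdef⟩ : ∃ x : ℝ, x = r j := ⟨_, rfl⟩
      have ht0 : 0 < t := by rw [htdef]; exact hrk0 j
      have htu : u < t := by rw [htdef]; exact (hr j).1
      have htv : t < v := by rw [htdef]; exact (hr j).2
      have ht1 : t < 1 := by rw [htdef]; exact hrk1 j
      have htne : ((t:ℝ):ℂ) ≠ 0 := by
        simpa using ne_of_gt ht0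
      obtain ⟨g, hgd, hgf⟩ := hinv j
      obtain ⟨hgm, hfg⟩ := hgprops j g hgf
      have hKiff : ∀ x, x ∈ ball (0:ℂ) 1 →
          (x ∈ f j '' closedBall (0:ℂ) (r j) ↔ ‖g x‖ ≤ t) := by
        intro x hx
        rw [← htdef]
        constructor
        · rintro ⟨a, ham, rfl⟩
          have ha1 : ‖a‖ < 1 := lt_of_le_of_lt (mem_closedBall_zero_iff.1 ham) ht1
          rw [hgf a (mem_ball_zero_iff.2 ha1)]
          exact mem_closedBall_zero_iff.1 ham
        · intro h
          exact ⟨g x, mem_closedBall_zero_iff.2 h, hfg x hx⟩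
      set b : ℂ := g z with hbdef
      have hfb : f j b = z := hfg z hzball
      have hb1 : ‖b‖ < 1 := mem_ball_zero_iff.1 (hgm hzball)
      have htb : t < ‖b‖ := by
        by_contra hle
        rw [not_lt] at hle
        exact hzKk j ((hKiff z hzball).2 hle)
      have hbne : b ≠ 0 := by
        intro h; rw [h] at htb; simp only [norm_zero] at htb; linarith only [ht0, htb]
      -- bound ‖b‖ from above
      obtain ⟨a', ha'm, hfa'⟩ := id hx0K
      have ha'n : ‖a'‖ ≤ t := by rw [htdef]; exact mem_closedBall_zero_iff.1 ha'm
      have ha'1 : ‖a'‖ < 1 := lt_of_le_of_lt ha'n ht1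
      have hiso := iso j g hgd hgf a' b ha'1 hb1
      rw [hfa', hfb] at hiso
      have hpab : prho a' b < s1 := by
        rw [← hiso, prho_symm]; exact hx0near
      have hbb := norm_bound a' b ha'1 hb1 hs1pos.le hpab.le
      have hbub : ‖b‖ * (1 + s1 * t) ≤ t + s1 :=
        arith_mono hbb (norm_nonneg a') ha'n (norm_nonneg b) hs1pos.le
          (by linarith only [hs1half]) hb1.le
      set q : ℂ := (t : ℂ) / b with hqdef
      have hqnorm : ‖q‖ = t / ‖b‖ := by
        rw [hqdef, norm_div, Complex.norm_real, Real.norm_of_nonneg ht0.le]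
      have hbpos : 0 < ‖b‖ := lt_trans ht0 htb
      have hq1 : ‖q‖ < 1 := by rw [hqnorm, div_lt_one hbpos]; exact htb
      have hqlb : t + c1 ≤ ‖q‖ := by
        rw [hqnorm, le_div_iff₀ hbpos]
        exact arith_qlb hbub h0u htu htv hv1 hs1pos hs1half hc1def hbpos
      have hqne : q ≠ 0 := by
        intro h; rw [h] at hqlb; simp only [norm_zero] at hqlb
        linarith only [ht0, hc1pos, hqlb]
      have hbq : b = (t : ℂ) / q := by
        rw [hqdef, div_div_eq_mul_div, mul_comm ((t:ℝ):ℂ) b, mul_div_assoc,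
          div_self htne, mul_one]
      -- the map
      set G : ℂ → ℂ := fun ζ => mob q ((t : ℂ) / g ζ) with hGdef
      have hgt : ∀ ζ, ζ ∈ DD → t < ‖g ζ‖ ∧ ‖g ζ‖ < 1 := by
        intro ζ hζ
        have hζb : ζ ∈ ball (0:ℂ) 1 := hDsub hζ
        refine ⟨?_, mem_ball_zero_iff.1 (hgm hζb)⟩
        by_contra hle
        rw [not_lt] at hle
        exact hζ.2 (Set.mem_iUnion.2 ⟨j, (hKiff ζ hζb).2 hle⟩)
      have hwnorm : ∀ ζ, ζ ∈ DD → ‖(t:ℂ)/ g ζ‖ < 1 ∧ g ζ ≠ 0 := by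
        intro ζ hζ
        obtain ⟨h1, h2⟩ := hgt ζ hζ
        have hgne : g ζ ≠ 0 := by
          intro h; rw [h] at h1; simp only [norm_zero] at h1; linarith only [ht0, h1]
        constructor
        · rw [norm_div, Complex.norm_real, Real.norm_of_nonneg ht0.le,
            div_lt_one (lt_trans ht0 h1)]
          linarith only [h1]
        · exact hgne
      refine ⟨G, ?_, ?_, ?_, ?_, hcpos, ?_⟩
      · -- differentiable
        intro ζ hζ
        obtain ⟨hn, hgne⟩ := hwnorm ζ hζ
        have h1 : DifferentiableWithinAt ℂ g DD ζ := (hgd.mono hDsub) ζ hζ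
        have h2 : DifferentiableWithinAt ℂ (fun ζ => (t:ℂ) / g ζ) DD ζ :=
          (differentiableWithinAt_const _).div h1 hgne
        exact (mob_diff_at q _ hq1 hn).comp_differentiableWithinAt ζ h2
      · -- injective
        intro ζ1 h1 ζ2 h2 heq
        obtain ⟨hn1, hgne1⟩ := hwnorm ζ1 h1
        obtain ⟨hn2, hgne2⟩ := hwnorm ζ2 h2
        have e1 : (t:ℂ)/ g ζ1 = (t:ℂ)/ g ζ2 := by
          have := congrArg (mob (-q)) heq
          simp only [hGdef] at this
          rwa [mob_left_inv q _ hq1 hn1, mob_left_inv q _ hq1 hn2] at this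
        have k1 : (t:ℂ)/((t:ℂ)/ g ζ1) = g ζ1 := by
          rw [div_div_eq_mul_div, mul_comm ((t:ℝ):ℂ) (g ζ1), mul_div_assoc,
            div_self htne, mul_one]
        have k2 : (t:ℂ)/((t:ℂ)/ g ζ2) = g ζ2 := by
          rw [div_div_eq_mul_div, mul_comm ((t:ℝ):ℂ) (g ζ2), mul_div_assoc,
            div_self htne, mul_one]
        have e2 : g ζ1 = g ζ2 := by rw [← k1, e1, k2]
        calc ζ1 = f j (g ζ1) := (hfg ζ1 (hDsub h1)).symm
        _ = f j (g ζ2) := by rw [e2]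
        _ = ζ2 := hfg ζ2 (hDsub h2)
      · -- image in ball
        rintro _ ⟨ζ, hζ, rfl⟩
        exact mem_ball_zero_iff.2 (mob_mem q _ hq1 (hwnorm ζ hζ).1)
      · -- G z = 0
        show mob q ((t : ℂ) / g z) = 0
        rw [(show ((t:ℝ):ℂ) / g z = q from rfl)]
        exact mob_self q
      · -- coverage
        intro y hy
        have hyc : ‖y‖ < c := mem_ball_zero_iff.1 hy
        have hy1 : ‖y‖ < 1 := lt_trans hyc hc_lt1
        set w1 : ℂ := mob (-q) y with hw1def
        have hw1n : ‖w1‖ < 1 := by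
          rw [hw1def]; exact mob_mem (-q) y (by simpa using hq1) hy1
        have hmq : mob q w1 = y := mob_right_inv q y hq1 hy1
        have hprho : prho q w1 = ‖y‖ := by rw [← mob_norm, hmq]
        have htw1 : t < ‖w1‖ := by
          by_contra hle
          rw [not_lt] at hle
          have h1 : ‖q‖ - ‖w1‖ ≤ prho w1 q := norm_sub_le_prho w1 q hw1n hq1
          rw [← prho_symm, hprho] at h1
          linarith only [h1, hle, hqlb, hyc, hc_half_c1, hc1pos]
        have hw1ne : w1 ≠ 0 := by
          intro h; rw [h] at htw1; simp only [norm_zero] at htw1; linarith only [ht0, htw1]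
        set w2 : ℂ := (t:ℂ) / w1 with hw2def
        have hw2n : ‖w2‖ = t / ‖w1‖ := by
          rw [hw2def, norm_div, Complex.norm_real, Real.norm_of_nonneg ht0.le]
        have hw1pos : 0 < ‖w1‖ := lt_trans ht0 htw1
        have hw2lt1 : ‖w2‖ < 1 := by rw [hw2n, div_lt_one hw1pos]; exact htw1
        have htw2 : t < ‖w2‖ := by
          rw [hw2n, lt_div_iff₀ hw1pos]
          nlinarith only [ht0, hw1n, hw1pos]
        set x : ℂ := f j w2 with hxdef
        have hxball : x ∈ ball (0:ℂ) 1 := hfmaps j (mem_ball_zero_iff.2 hw2lt1)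
        have hx1 : ‖x‖ < 1 := mem_ball_zero_iff.1 hxball
        have hgx : g x = w2 := hgf w2 (mem_ball_zero_iff.2 hw2lt1)
        have hGx : G x = y := by
          have htw2' : (t:ℂ) / w2 = w1 := by
            rw [hw2def, div_div_eq_mul_div, mul_comm ((t:ℝ):ℂ) w1, mul_div_assoc,
              div_self htne, mul_one]
          show mob q ((t : ℂ) / g x) = y
          rw [hgx, htw2', hmq]
        refine ⟨x, ⟨hxball, ?_⟩, hGx⟩
        intro hU
        obtain ⟨S, ⟨m, rfl⟩, hmS⟩ := hU
        by_cases hmj : m = j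
        · subst hmj
          have hthis := (hKiff x hxball).1 hmS
          rw [hgx] at hthis
          linarith only [hthis, htw2]
        · -- far disc: contradiction with separation
          have hsep := sep j m (fun h => hmj h.symm) x0 hx0K x hmS
          have hx0b : ‖x0‖ < 1 := hKball j x0 hx0K
          have htri := prho_triangle z x0 x hz1 hx0b hx1
          have hzx : s4 < prho z x := by
            rw [hs4def]
            linarith only [hx0near, hsep, htri]
          -- compute prho z x
          have hisox := iso j g hgd hgf b w2 hb1 hw2lt1
          rw [hfb] at hisox
          have hzx2 : prho z x = prho b w2 := by rw [hxdef, ← hisox]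
          -- formula
          have hform : prho b w2 = t * ‖q - w1‖ / ‖conj' q * w1 - ((t:ℂ))^2‖ := by
            rw [hbq, hw2def]
            exact prho_div_formula ht0 hqne hw1ne
          -- numerator bound
          have hnum : ‖q - w1‖ ≤ 2 * c := by
            have e : ‖w1 - q‖ = ‖y‖ * ‖1 - conj' q * w1‖ := by
              rw [← hprho, prho, div_mul_cancel₀]
              exact norm_ne_zero_iff.2 (denom_ne q w1 hq1 hw1n.le)
            have hden2 : ‖1 - conj' q * w1‖ ≤ 2 := by
              calc ‖1 - conj' q * w1‖ ≤ ‖(1:ℂ)‖ + ‖conj' q * w1‖ := norm_sub_le _ _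
              _ = 1 + ‖q‖ * ‖w1‖ := by rw [norm_one, norm_mul, RCLike.norm_conj]
              _ ≤ 2 := by nlinarith only [norm_nonneg q, norm_nonneg w1, hq1, hw1n]
            rw [norm_sub_rev, e]
            nlinarith only [norm_nonneg y, norm_nonneg (1 - conj' q * w1), hyc, hden2, hcpos]
          -- denominator bound
          have hden : c1 * t ≤ ‖conj' q * w1 - ((t:ℂ))^2‖ := by
            have h1 : ‖conj' q * w1‖ - ‖((t:ℂ))^2‖ ≤ ‖conj' q * w1 - ((t:ℂ))^2‖ :=
              norm_sub_norm_le _ _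
            have h2 : ‖conj' q * w1‖ = ‖q‖ * ‖w1‖ := by rw [norm_mul, RCLike.norm_conj]
            have h3 : ‖((t:ℂ))^2‖ = t^2 := by
              rw [norm_pow, Complex.norm_real, Real.norm_of_nonneg ht0.le]
            have h4 : (t + c1) * t ≤ ‖q‖ * ‖w1‖ := by
              nlinarith only [hqlb, htw1, hc1pos, ht0]
            rw [h2, h3] at h1
            nlinarith only [h1, h4]
          have hfinal : prho b w2 ≤ 2 * c / c1 := by
            rw [hform]
            have hd : 0 < c1 * t := by positivity
            calc t * ‖q - w1‖ / ‖conj' q * w1 - ((t:ℂ))^2‖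
                ≤ t * (2 * c) / (c1 * t) := by
                  apply div_le_div₀ (by positivity)
                  · nlinarith only [norm_nonneg (q - w1), hnum, ht0]
                  · exact hd
                  · exact hden
            _ = 2 * c / c1 := by
                  rw [mul_comm c1 t, ← div_div, mul_comm t (2*c), mul_div_assoc,
                    div_self (ne_of_gt ht0), mul_one]
          have hlast : 2 * c / c1 ≤ s4 / 2 := by
            rw [div_le_div_iff₀ hc1pos (by norm_num : (0:ℝ) < 2)]
            nlinarith only [hc_le, hc1pos, hs4pos]
          rw [hzx2] at hzx
          linarith only [hfinal, hlast, hzx, hs4pos]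
    · -- Case A : all removed discs are far from z
      have hfar : ∀ k, ∀ x0 ∈ f k '' closedBall (0:ℂ) (r k), s1 ≤ prho z x0 := by
        intro k x0 hx0
        by_contra hlt
        rw [not_le] at hlt
        exact hcase ⟨k, x0, hx0, hlt⟩
      refine ⟨mob z, ?_, ?_, ?_, mob_self z, hcpos, ?_⟩
      · exact fun x hx =>
          (mob_diff_at z x hz1 (mem_ball_zero_iff.1 (hDsub hx))).differentiableWithinAt
      · intro x hx y hy hxy
        have hx1 : ‖x‖ < 1 := mem_ball_zero_iff.1 (hDsub hx)
        have hy1 : ‖y‖ < 1 := mem_ball_zero_iff.1 (hDsub hy)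
        calc x = mob (-z) (mob z x) := (mob_left_inv z x hz1 hx1).symm
        _ = mob (-z) (mob z y) := by rw [hxy]
        _ = y := mob_left_inv z y hz1 hy1
      · rintro _ ⟨x, hx, rfl⟩
        exact mem_ball_zero_iff.2 (mob_mem z x hz1 (mem_ball_zero_iff.1 (hDsub hx)))
      · intro y hy
        have hyc : ‖y‖ < c := mem_ball_zero_iff.1 hy
        have hy1 : ‖y‖ < 1 := lt_trans hyc hc_lt1
        have hx1 : ‖mob (-z) y‖ < 1 := mob_mem (-z) y (by simpa using hz1) hy1
        have heq : mob z (mob (-z) y) = y := mob_right_inv z y hz1 hy1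
        refine ⟨mob (-z) y, ⟨mem_ball_zero_iff.2 hx1, ?_⟩, heq⟩
        intro hU
        obtain ⟨S, ⟨k, rfl⟩, hkS⟩ := hU
        have hthis := hfar k (mob (-z) y) hkS
        have hpr : prho z (mob (-z) y) = ‖y‖ := by rw [← mob_norm, heq]
        rw [hpr] at hthis
        linarith only [hc_le_s1, hthis, hyc]
  -- conclude via le_csSup
  obtain ⟨F, hF1, hF2, hF3, hF4, hF5, hF6⟩ := main
  rw [squeezingFn]
  apply le_csSup
  · refine ⟨1, ?_⟩
    rintro x ⟨F', hF'1, hF'2, hF'3, hF'4, hxpos, hsub⟩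
    by_contra hx1
    rw [not_le] at hx1
    have hmem : ((1:ℝ) : ℂ) ∈ ball (0:ℂ) x := by
      simp only [mem_ball_zero_iff, Complex.ofReal_one, norm_one]
      linarith only [hx1]
    have hcontr := hF'3 (hsub hmem)
    simp only [mem_ball_zero_iff, Complex.ofReal_one, norm_one] at hcontr
    exact lt_irrefl _ hcontr
  · exact ⟨F, hF1, hF2, hF3, hF4, hF5, hF6⟩
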